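/- Let E be a complex Hilbert space, let n ≥ 1 and m ≥ 1 be integers, let γ₁, …, γₙ ∈ Mₘ(ℂ) be self-adjoint unitary matrices that pairwise anticommute (γⱼγₖ = −γₖγⱼ for j ≠ k), and let A₁, …, Aₙ be bounded linear operators on E. Let X = Σⱼ Aⱼ ⊗ γⱼ, the block operator on Eᵐ whose (i, l) block is Σⱼ (γⱼ)_{il} Aⱼ. Then for every j ∈ {1, …, n} one has ‖Aⱼ‖ ≤ ‖X‖, where the norms are the operator norms on B(E) and on B(Eᵐ) respectively. -/

import Mathlib

open scoped Matrix

/-- If `γ₁, …, γₙ` are self-adjoint unitary pairwise anticommuting matrices in `Mₘ(ℂ)`,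
`A₁, …, Aₙ` are bounded operators on a complex Hilbert space `E`, and
`X = Σⱼ Aⱼ ⊗ γⱼ` is the associated block operator on `Eᵐ`, then `‖Aⱼ‖ ≤ ‖X‖` for all `j`. -/
theorem norm_coeff_le_norm_clifford_sum {E : Type*} [NormedAddCommGroup E]
    [InnerProductSpace ℂ E] [CompleteSpace E]
    (n m : ℕ) (hn : 1 ≤ n) (hm : 1 ≤ m)
    (γ : Fin n → Matrix (Fin m) (Fin m) ℂ)
    (hsa : ∀ j, (γ j)ᴴ = γ j)
    (hunit : ∀ j, γ j * γ j = 1)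
    (hanti : ∀ j k, j ≠ k → γ j * γ k = -(γ k * γ j))
    (A : Fin n → E →L[ℂ] E)
    (X : PiLp 2 (fun _ : Fin m => E) →L[ℂ] PiLp 2 (fun _ : Fin m => E))
    (hX : ∀ (ξ : PiLp 2 (fun _ : Fin m => E)) (i : Fin m),
      X ξ i = ∑ j, ∑ l, γ j i l • A j (ξ l)) :
    ∀ j, ‖A j‖ ≤ ‖X‖ := by
  intro j
  refine (A j).opNorm_le_bound (norm_nonneg X) (fun v => ?_)
  by_cases hw0 : A j v = 0
  · rw [hw0, norm_zero]; positivity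
  set w := A j v with hw
  -- the test vectors: ξ i₀ has l-component conj(γ j i₀ l) • v
  set ξ : Fin m → PiLp 2 (fun _ : Fin m => E) :=
    fun i₀ => WithLp.toLp 2 (fun l => (starRingEnd ℂ) (γ j i₀ l) • v) with hξ
  -- row sums of squared moduli are 1
  have hrow : ∀ i₀ : Fin m, ∑ l, ‖γ j i₀ l‖ ^ 2 = 1 := by
    intro i₀
    have h1 : (γ j * (γ j)ᴴ) i₀ i₀ = 1 := by
      rw [hsa, hunit]; simp [Matrix.one_apply]
    have h2 : (γ j * (γ j)ᴴ) i₀ i₀ = ∑ l, ((‖γ j i₀ l‖ : ℂ)) ^ 2 := by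
      simp only [Matrix.mul_apply, Matrix.conjTranspose_apply]
      refine Finset.sum_congr rfl (fun l _ => ?_)
      rw [show star (γ j i₀ l) = (starRingEnd ℂ) (γ j i₀ l) from rfl, Complex.mul_conj]
      norm_cast
      rw [Complex.normSq_eq_norm_sq]
    have := h2.symm.trans h1
    exact_mod_cast this
  have hξnorm : ∀ i₀, ‖ξ i₀‖ = ‖v‖ := by
    intro i₀
    rw [PiLp.norm_eq_of_L2]
    have : ∑ l, ‖ξ i₀ l‖ ^ 2 = ‖v‖ ^ 2 := by
      simp only [hξ, WithLp.ofLp_toLp, norm_smul, mul_pow]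
      rw [← Finset.sum_mul]
      simp only [RingHomIsometric.norm_map]
      rw [hrow, one_mul]
    rw [this, Real.sqrt_sq (norm_nonneg v)]
  -- component norm ≤ total norm in PiLp 2
  have hcomp : ∀ (x : PiLp 2 (fun _ : Fin m => E)) (i : Fin m), ‖x i‖ ≤ ‖x‖ := by
    intro x i
    have h1 : ‖x i‖ ^ 2 ≤ ∑ l, ‖x l‖ ^ 2 :=
      Finset.single_le_sum (f := fun l => ‖x l‖ ^ 2) (fun l _ => by positivity)
        (Finset.mem_univ i)
    calc ‖x i‖ = Real.sqrt (‖x i‖ ^ 2) := (Real.sqrt_sq (norm_nonneg _)).symm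
      _ ≤ Real.sqrt (∑ l, ‖x l‖ ^ 2) := Real.sqrt_le_sqrt h1
      _ = ‖x‖ := (PiLp.norm_eq_of_L2 x).symm
  -- traces
  have htr : ∀ k, (γ k * γ j).trace = if k = j then (m : ℂ) else 0 := by
    intro k
    by_cases hk : k = j
    · subst hk; rw [hunit]; simp [Matrix.trace_one]
    · rw [if_neg hk]
      have h1 : (γ k * γ j).trace = -((γ j * γ k).trace) := by
        rw [hanti k j hk, Matrix.trace_neg]
      rw [Matrix.trace_mul_comm] at h1
      rw [Matrix.trace_mul_comm]
      linear_combination h1 / 2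
  -- the key identity
  have key : ∑ i₀, (inner ℂ w ((X (ξ i₀)) i₀) : ℂ) = (m : ℂ) * (‖w‖ : ℂ) ^ 2 := by
    have step : ∀ i₀ : Fin m, (inner ℂ w ((X (ξ i₀)) i₀) : ℂ)
        = ∑ k, (∑ l, γ k i₀ l * (starRingEnd ℂ) (γ j i₀ l)) * (inner ℂ w (A k v) : ℂ) := by
      intro i₀
      rw [hX]
      rw [inner_sum]
      refine Finset.sum_congr rfl (fun k _ => ?_)
      rw [inner_sum, Finset.sum_mul]
      refine Finset.sum_congr rfl (fun l _ => ?_)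
      simp only [hξ, WithLp.ofLp_toLp, map_smul, inner_smul_right, smul_eq_mul]
      ring
    rw [Finset.sum_congr rfl (fun i₀ _ => step i₀), Finset.sum_comm]
    have : ∀ k : Fin n, ∑ i₀, (∑ l, γ k i₀ l * (starRingEnd ℂ) (γ j i₀ l)) * (inner ℂ w (A k v) : ℂ)
        = (γ k * γ j).trace * (inner ℂ w (A k v) : ℂ) := by
      intro k
      rw [← Finset.sum_mul]
      congr 1
      have hconj : ∀ i l, (starRingEnd ℂ) (γ j i l) = γ j l i := by
        intro i l
        conv_rhs => rw [← hsa j]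
        rfl
      simp only [Matrix.trace, Matrix.diag, Matrix.mul_apply]
      exact Finset.sum_congr rfl fun i₀ _ => Finset.sum_congr rfl fun l _ => by rw [hconj]
    rw [Finset.sum_congr rfl (fun k _ => this k)]
    rw [Finset.sum_congr rfl (fun k _ => by rw [htr k])]
    simp only [ite_mul, zero_mul]
    rw [Finset.sum_ite_eq' Finset.univ j (fun k => (m:ℂ) * (inner ℂ w (A k v) : ℂ)),
      if_pos (Finset.mem_univ j), ← hw, inner_self_eq_norm_sq_to_K]
    rfl
  have hbound : ∀ i₀ : Fin m, ‖(inner ℂ w ((X (ξ i₀)) i₀) : ℂ)‖ ≤ ‖w‖ * (‖X‖ * ‖v‖) := by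
    intro i₀
    calc ‖(inner ℂ w ((X (ξ i₀)) i₀) : ℂ)‖ ≤ ‖w‖ * ‖(X (ξ i₀)) i₀‖ := norm_inner_le_norm _ _
      _ ≤ ‖w‖ * ‖X (ξ i₀)‖ := by gcongr; exact hcomp _ _
      _ ≤ ‖w‖ * (‖X‖ * ‖ξ i₀‖) := by gcongr; exact X.le_opNorm _
      _ = ‖w‖ * (‖X‖ * ‖v‖) := by rw [hξnorm]
  have hsum : (m : ℝ) * ‖w‖ ^ 2 ≤ (m : ℝ) * (‖w‖ * (‖X‖ * ‖v‖)) := by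
    have h1 : ‖∑ i₀, (inner ℂ w ((X (ξ i₀)) i₀) : ℂ)‖ = (m : ℝ) * ‖w‖ ^ 2 := by
      rw [key, norm_mul, norm_pow]
      simp [Complex.norm_natCast, Complex.norm_real]
    calc (m : ℝ) * ‖w‖ ^ 2 = ‖∑ i₀, (inner ℂ w ((X (ξ i₀)) i₀) : ℂ)‖ := h1.symm
      _ ≤ ∑ i₀ : Fin m, ‖(inner ℂ w ((X (ξ i₀)) i₀) : ℂ)‖ := norm_sum_le _ _
      _ ≤ ∑ _i₀ : Fin m, ‖w‖ * (‖X‖ * ‖v‖) := Finset.sum_le_sum (fun i₀ _ => hbound i₀)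
      _ = (m : ℝ) * (‖w‖ * (‖X‖ * ‖v‖)) := by
          rw [Finset.sum_const, Finset.card_univ, Fintype.card_fin, nsmul_eq_mul]
  have hwpos : 0 < ‖w‖ := norm_pos_iff.mpr hw0
  have hmpos : (0 : ℝ) < m := by exact_mod_cast Nat.lt_of_lt_of_le Nat.zero_lt_one hm
  nlinarith [hsum, hwpos, hmpos, mul_pos hmpos hwpos]
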